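/- Let p be an odd prime and k ≥ 2 an integer. If s₁ and s₂ are finite multisets of complex p^k-th roots of unity with |s₁| = |s₂|, then |s₁^{(p^k)}| = |s₂^{(p^k)}|, i.e., the sum of the entries of multiplicative order exactly p^k (with multiplicity) is the same for s₁ and s₂. -/

import Mathlib

open CategoryTheory

/-- `Qcyc N` is the `N`-th cyclotomic field `ℚ(ζ_N)`, realised as the subfield of `ℂ`
generated by all `N`-th roots of unity. -/
noncomputable def Qcyc (N : ℕ) : IntermediateField ℚ ℂ :=
  IntermediateField.adjoin ℚ {z : ℂ | z ^ N = 1}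

/-- `Qadj c` is the subfield `ℚ(c)` of `ℂ` generated by a complex number `c`. -/
noncomputable def Qadj (c : ℂ) : IntermediateField ℚ ℂ :=
  IntermediateField.adjoin ℚ {c}

/-- `f` is the conductor of the complex number `c`: the least positive integer `N`
with `c ∈ ℚ(ζ_N)`. -/
def IsConductorOf (c : ℂ) (f : ℕ) : Prop :=
  IsLeast {N : ℕ | 0 < N ∧ c ∈ Qcyc N} f

/-- `f` is the conductor of the character `χ`: the least positive integer `N` such that all
values of `χ` lie in `ℚ(ζ_N)`. -/
def IsCharConductor {G : Type*} [Monoid G] (χ : G → ℂ) (f : ℕ) : Prop :=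
  IsLeast {N : ℕ | 0 < N ∧ ∀ g, χ g ∈ Qcyc N} f

/-- Property 1.3 of Navarro–Tiep for `(G, χ, p)`: writing the conductor of `χ` as
`f = p ^ a * m` with `p ∤ m` (so that `p ^ a = p ^ (f.factorization p)` is the `p`-part of `f`),
there is a `p`-element `g ∈ G` such that `p ∤ [ℚ(ζ_{p^a}) : ℚ(χ(g))]`. -/
def Property13 {G : Type*} [Group G] (χ : G → ℂ) (p : ℕ) : Prop :=
  ∀ f : ℕ, IsCharConductor χ f →
    ∃ g : G, (∃ j : ℕ, orderOf g = p ^ j) ∧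
      ¬ p ∣ (Qadj (χ g)).relfinrank (Qcyc (p ^ f.factorization p))

open Polynomial IntermediateField in
lemma stmt3_exists_hom (p k : ℕ) (hp : p.Prime) (hk : 2 ≤ k) :
    ∃ (K : IntermediateField ℚ ℂ) (φ : K →ₐ[ℚ] ℂ),
      (∀ z : ℂ, z ^ p ^ k = 1 → z ∈ K) ∧
      ∀ x : K, (x : ℂ) ^ p ^ k = 1 → φ x = (x : ℂ) ^ (1 + p ^ (k - 1)) := by
  have hn : p ^ k ≠ 0 := pow_ne_zero _ hp.pos.ne'
  have hnpos : 0 < p ^ k := Nat.pos_of_ne_zero hn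
  haveI : NeZero (p ^ k) := ⟨hn⟩
  obtain ⟨ζ, hζ⟩ : ∃ ζ : ℂ, IsPrimitiveRoot ζ (p ^ k) :=
    ⟨_, Complex.isPrimitiveRoot_exp _ hn⟩
  set c : ℕ := 1 + p ^ (k - 1) with hc
  have hcop : Nat.Coprime c (p ^ k) := by
    apply Nat.Coprime.pow_right
    rw [Nat.coprime_comm, hp.coprime_iff_not_dvd]
    intro hdvd
    have h1 : p ∣ p ^ (k - 1) := dvd_pow_self p (by omega)
    have h2 : p ∣ 1 := by
      have := Nat.dvd_sub hdvd h1
      simpa [hc] using this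
    exact hp.one_lt.ne' (Nat.dvd_one.mp h2)
  have hζc : IsPrimitiveRoot (ζ ^ c) (p ^ k) := hζ.pow_of_coprime c hcop
  have hint : IsIntegral ℚ ζ := (hζ.isIntegral hnpos).tower_top
  have hmin : minpoly ℚ ζ = cyclotomic (p ^ k) ℚ :=
    (Polynomial.cyclotomic_eq_minpoly_rat hζ hnpos).symm
  have haev : aeval (ζ ^ c) (@minpoly ℚ ℚ⟮ζ⟯ _ _ (IntermediateField.algebra' ℚ⟮ζ⟯)
      ((IntermediateField.adjoin.powerBasis hint).gen)) = 0 := by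
    rw [IntermediateField.adjoin.powerBasis_gen]
    erw [IntermediateField.minpoly_gen]
    rw [hmin,
      aeval_def, Polynomial.eval₂_eq_eval_map, map_cyclotomic]
    exact hζc.isRoot_cyclotomic hnpos
  refine ⟨ℚ⟮ζ⟯, (IntermediateField.adjoin.powerBasis hint).lift (ζ ^ c) haev, ?_, ?_⟩
  · intro z hz
    obtain ⟨m, -, rfl⟩ := hζ.eq_pow_of_pow_eq_one hz
    exact pow_mem (IntermediateField.mem_adjoin_simple_self ℚ ζ) m
  · intro x hx
    obtain ⟨m, -, hm⟩ := hζ.eq_pow_of_pow_eq_one hx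
    have hxg : x = (IntermediateField.AdjoinSimple.gen ℚ ζ) ^ m := by
      apply Subtype.coe_injective
      push_cast
      rw [← hm]
      simp [IntermediateField.AdjoinSimple.coe_gen]
    have hgen : (IntermediateField.adjoin.powerBasis hint).lift (ζ ^ c) haev
        (IntermediateField.AdjoinSimple.gen ℚ ζ) = ζ ^ c := by
      rw [← IntermediateField.adjoin.powerBasis_gen hint]
      exact PowerBasis.lift_gen _ _ _
    rw [hxg]
    refine (map_pow ((IntermediateField.adjoin.powerBasis hint).lift (ζ ^ c) haev) _ m).trans ?_
    rw [hgen]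
    have hcoe : ((IntermediateField.AdjoinSimple.gen ℚ ζ ^ m : ℚ⟮ζ⟯) : ℂ) = ζ ^ m := by
      push_cast
      simp [IntermediateField.AdjoinSimple.coe_gen]
    rw [hcoe, ← pow_mul, ← pow_mul, mul_comm]

lemma stmt3_step (p k : ℕ) (hp : p.Prime) (hk : 2 ≤ k) (s₁ s₂ : Multiset ℂ)
    (hs₁ : ∀ z ∈ s₁, z ^ p ^ k = 1) (hs₂ : ∀ z ∈ s₂, z ^ p ^ k = 1)
    (hval : s₁.sum = s₂.sum) :
    (s₁.map (fun z => z ^ (1 + p ^ (k - 1)))).sum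
      = (s₂.map (fun z => z ^ (1 + p ^ (k - 1)))).sum := by
  obtain ⟨K, φ, hmem, hφ⟩ := stmt3_exists_hom p k hp hk
  have lift : ∀ (s : Multiset ℂ), (∀ z ∈ s, z ^ p ^ k = 1) →
      ∃ u : Multiset K, u.map (fun x : K => (x : ℂ)) = s := by
    intro s hs
    refine ⟨s.attach.map (fun x => (⟨x.1, hmem x.1 (hs x.1 x.2)⟩ : K)), ?_⟩
    rw [Multiset.map_map]
    exact s.attach_map_val
  obtain ⟨u₁, hu₁⟩ := lift s₁ hs₁
  obtain ⟨u₂, hu₂⟩ := lift s₂ hs₂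
  have hcoesum : ∀ u : Multiset K, ((u.sum : K) : ℂ) = (u.map (fun x : K => (x : ℂ))).sum := by
    intro u
    exact map_multiset_sum (K.val) u
  have hsum : u₁.sum = u₂.sum := by
    have h : ((u₁.sum : K) : ℂ) = ((u₂.sum : K) : ℂ) := by
      rw [hcoesum, hcoesum, hu₁, hu₂]
      exact hval
    exact Subtype.coe_injective h
  have hmap : ∀ (u : Multiset K) (s : Multiset ℂ),
      u.map (fun x : K => (x : ℂ)) = s → (∀ z ∈ s, z ^ p ^ k = 1) →
      u.map φ = s.map (fun z => z ^ (1 + p ^ (k - 1))) := by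
    intro u s hu hscond
    rw [← hu, Multiset.map_map]
    refine Multiset.map_congr rfl ?_
    intro x hx
    exact hφ x (hscond _ (hu ▸ Multiset.mem_map_of_mem _ hx))
  have := congrArg φ hsum
  rw [map_multiset_sum, map_multiset_sum, hmap u₁ s₁ hu₁ hs₁, hmap u₂ s₂ hu₂ hs₂] at this
  exact this

lemma stmt3_iter (p k : ℕ) (hp : p.Prime) (hk : 2 ≤ k) (s₁ s₂ : Multiset ℂ)
    (hs₁ : ∀ z ∈ s₁, z ^ p ^ k = 1) (hs₂ : ∀ z ∈ s₂, z ^ p ^ k = 1)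
    (hval : s₁.sum = s₂.sum) (t : ℕ) :
    (s₁.map (fun z => z ^ (1 + p ^ (k - 1)) ^ t)).sum
      = (s₂.map (fun z => z ^ (1 + p ^ (k - 1)) ^ t)).sum := by
  induction t with
  | zero => simpa using hval
  | succ t ih =>
    have hpow : ∀ (s : Multiset ℂ), (∀ z ∈ s, z ^ p ^ k = 1) →
        ∀ z ∈ s.map (fun z => z ^ (1 + p ^ (k - 1)) ^ t), z ^ p ^ k = 1 := by
      intro s hs z hz
      obtain ⟨w, hw, rfl⟩ := Multiset.mem_map.mp hz
      rw [← pow_mul, mul_comm, pow_mul, hs w hw, one_pow]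
    have hfun : (fun z : ℂ => z ^ (1 + p ^ (k - 1)) ^ (t + 1))
        = (fun z : ℂ => z ^ (1 + p ^ (k - 1))) ∘ (fun z : ℂ => z ^ (1 + p ^ (k - 1)) ^ t) := by
      funext z
      simp only [Function.comp_apply, ← pow_mul, ← pow_succ]
    rw [hfun, ← Multiset.map_map, ← Multiset.map_map]
    exact stmt3_step p k hp hk _ _ (hpow s₁ hs₁) (hpow s₂ hs₂) ih

lemma stmt3_mod (p k t : ℕ) (hk : 2 ≤ k) :
    (1 + p ^ (k - 1)) ^ t ≡ 1 + t * p ^ (k - 1) [MOD p ^ k] := by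
  induction t with
  | zero => simpa using Nat.ModEq.refl 1
  | succ t ih =>
    have h2 : p ^ k ∣ t * (p ^ (k - 1) * p ^ (k - 1)) := by
      refine Dvd.dvd.mul_left ?_ t
      rw [← pow_add]
      exact pow_dvd_pow p (by omega)
    calc (1 + p ^ (k - 1)) ^ (t + 1)
        = (1 + p ^ (k - 1)) ^ t * (1 + p ^ (k - 1)) := pow_succ _ _
      _ ≡ (1 + t * p ^ (k - 1)) * (1 + p ^ (k - 1)) [MOD p ^ k] := ih.mul_right _
      _ = 1 + (t + 1) * p ^ (k - 1) + t * (p ^ (k - 1) * p ^ (k - 1)) := by ring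
      _ ≡ 1 + (t + 1) * p ^ (k - 1) + 0 [MOD p ^ k] :=
          Nat.ModEq.add_left _ ((Nat.modEq_zero_iff_dvd).mpr h2)
      _ = 1 + (t + 1) * p ^ (k - 1) := by ring

lemma stmt3_pow_congr {z : ℂ} {n a b : ℕ} (hz : z ^ n = 1) (h : a ≡ b [MOD n]) :
    z ^ a = z ^ b := by
  have key : ∀ m : ℕ, z ^ m = z ^ (m % n) := by
    intro m
    conv_lhs => rw [← Nat.mod_add_div m n]
    rw [pow_add, pow_mul, hz, one_pow, mul_one]
  rw [key a, key b]
  exact congrArg (fun i => z ^ i) h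

open scoped Classical in
lemma stmt3_T (p k : ℕ) (hp : p.Prime) (hk : 2 ≤ k) (z : ℂ) (hz : z ^ p ^ k = 1) :
    ∑ t ∈ Finset.range p, z ^ (1 + p ^ (k - 1)) ^ t
      = if orderOf z = p ^ k then 0 else (p : ℂ) * z := by
  have hord : orderOf z ∣ p ^ k := orderOf_dvd_of_pow_eq_one hz
  have hzt : ∀ t, z ^ (1 + p ^ (k - 1)) ^ t = z * (z ^ p ^ (k - 1)) ^ t := by
    intro t
    calc z ^ (1 + p ^ (k - 1)) ^ t = z ^ (1 + t * p ^ (k - 1)) :=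
          stmt3_pow_congr hz (stmt3_mod p k t hk)
      _ = z * (z ^ p ^ (k - 1)) ^ t := by rw [pow_add, pow_one, mul_comm t, pow_mul]
  simp only [hzt]
  rw [← Finset.mul_sum]
  have hk1 : p ^ (k - 1) * p = p ^ k := by
    rw [← pow_succ]
    congr 1
    omega
  by_cases h : orderOf z = p ^ k
  · rw [if_pos h]
    have hω : z ^ p ^ (k - 1) ≠ 1 := by
      intro h1
      have hdvd : orderOf z ∣ p ^ (k - 1) := orderOf_dvd_of_pow_eq_one h1
      rw [h] at hdvd
      have hle := Nat.le_of_dvd (pow_pos hp.pos _) hdvd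
      have hlt : p ^ (k - 1) < p ^ k := Nat.pow_lt_pow_right hp.one_lt (by omega)
      omega
    have hωp : (z ^ p ^ (k - 1)) ^ p = 1 := by rw [← pow_mul, hk1, hz]
    rw [geom_sum_eq hω, hωp, sub_self, zero_div, mul_zero]
  · rw [if_neg h]
    have hdvd : orderOf z ∣ p ^ (k - 1) := by
      obtain ⟨j, hj, hje⟩ := (Nat.dvd_prime_pow hp).mp hord
      rw [hje]
      refine pow_dvd_pow p ?_
      rcases Nat.eq_or_lt_of_le hj with h' | h'
      · exact absurd (hje.trans (by rw [h'])) h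
      · omega
    have hω : z ^ p ^ (k - 1) = 1 := orderOf_dvd_iff_pow_eq_one.mp hdvd
    simp [hω, mul_comm]

lemma stmt3_swap (s : Multiset ℂ) (n : ℕ) (g : ℕ → ℂ → ℂ) :
    ∑ t ∈ Finset.range n, (s.map (g t)).sum
      = (s.map (fun z => ∑ t ∈ Finset.range n, g t z)).sum := by
  induction s using Multiset.induction with
  | empty => simp
  | cons a s ih => simp [Finset.sum_add_distrib, ih]

lemma stmt3_sum_mul (t : Multiset ℂ) (b : ℂ) :
    (t.map (fun z => b * z)).sum = b * t.sum := by
  induction t using Multiset.induction with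
  | empty => simp
  | cons a t ih => simp [ih, mul_add]

open scoped Classical in
/-- two multisets of `p^k`-th roots of unity with the same value have the same
sum over the entries of multiplicative order exactly `p^k`. -/
theorem stmt3 (p k : ℕ) (hp : p.Prime) (hodd : Odd p) (hk : 2 ≤ k)
    (s₁ s₂ : Multiset ℂ)
    (hs₁ : ∀ z ∈ s₁, z ^ p ^ k = 1) (hs₂ : ∀ z ∈ s₂, z ^ p ^ k = 1)
    (hval : s₁.sum = s₂.sum) :
    (s₁.filter (fun z => orderOf z = p ^ k)).sum
      = (s₂.filter (fun z => orderOf z = p ^ k)).sum := by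
  have hsum : (s₁.map (fun z => ∑ t ∈ Finset.range p, z ^ (1 + p ^ (k - 1)) ^ t)).sum
      = (s₂.map (fun z => ∑ t ∈ Finset.range p, z ^ (1 + p ^ (k - 1)) ^ t)).sum := by
    rw [← stmt3_swap, ← stmt3_swap]
    exact Finset.sum_congr rfl fun t _ => stmt3_iter p k hp hk s₁ s₂ hs₁ hs₂ hval t
  have hs_eq : ∀ (s : Multiset ℂ), (∀ z ∈ s, z ^ p ^ k = 1) →
      (s.map (fun z => ∑ t ∈ Finset.range p, z ^ (1 + p ^ (k - 1)) ^ t)).sum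
        = (p : ℂ) * (s.filter (fun z => ¬ orderOf z = p ^ k)).sum := by
    intro s hs
    have h1 : s.map (fun z => ∑ t ∈ Finset.range p, z ^ (1 + p ^ (k - 1)) ^ t)
        = s.map (fun z => if orderOf z = p ^ k then 0 else (p : ℂ) * z) :=
      Multiset.map_congr rfl (fun z hz => stmt3_T p k hp hk z (hs z hz))
    rw [h1]
    conv_lhs => rw [← Multiset.filter_add_not (fun z => orderOf z = p ^ k) s]
    rw [Multiset.map_add, Multiset.sum_add]
    have h2 : (s.filter (fun z => orderOf z = p ^ k)).map
        (fun z => if orderOf z = p ^ k then 0 else (p : ℂ) * z)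
        = (s.filter (fun z => orderOf z = p ^ k)).map (fun _ => (0 : ℂ)) :=
      Multiset.map_congr rfl (fun z hz => if_pos (Multiset.mem_filter.mp hz).2)
    have h3 : (s.filter (fun z => ¬ orderOf z = p ^ k)).map
        (fun z => if orderOf z = p ^ k then 0 else (p : ℂ) * z)
        = (s.filter (fun z => ¬ orderOf z = p ^ k)).map (fun z => (p : ℂ) * z) :=
      Multiset.map_congr rfl (fun z hz => if_neg (Multiset.mem_filter.mp hz).2)
    rw [h2, h3, stmt3_sum_mul]
    simp
  have hne : (p : ℂ) ≠ 0 := Nat.cast_ne_zero.mpr hp.pos.ne'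
  have hfil : (s₁.filter (fun z => ¬ orderOf z = p ^ k)).sum
      = (s₂.filter (fun z => ¬ orderOf z = p ^ k)).sum := by
    apply mul_left_cancel₀ hne
    rw [← hs_eq s₁ hs₁, ← hs_eq s₂ hs₂]
    exact hsum
  have e₁ : (s₁.filter (fun z => orderOf z = p ^ k)).sum
      + (s₁.filter (fun z => ¬ orderOf z = p ^ k)).sum = s₁.sum := by
    rw [← Multiset.sum_add, Multiset.filter_add_not]
  have e₂ : (s₂.filter (fun z => orderOf z = p ^ k)).sum
      + (s₂.filter (fun z => ¬ orderOf z = p ^ k)).sum = s₂.sum := by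
    rw [← Multiset.sum_add, Multiset.filter_add_not]
  have key := e₁.trans (hval.trans e₂.symm)
  rw [hfil] at key
  exact add_right_cancel key
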